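/- Assume d is bounded with θ ≤ 1, so that both d_E and d_Em are metrics on E. Then d_E and d_Em induce the same topology on E. -/

import Mathlib

/-- `ρ` is a metric: zero iff equal, symmetric, triangle inequality. -/
def IsMetric {α : Type*} (ρ : α → α → ℝ) : Prop :=
  (∀ x y, ρ x y = 0 ↔ x = y) ∧ (∀ x y, ρ x y = ρ y x) ∧
    ∀ x y z, ρ x z ≤ ρ x y + ρ y z

def IsCauchyWith {α : Type*} (ρ : α → α → ℝ) (S : ℕ → α) : Prop :=
  ∀ ε : ℝ, 0 < ε → ∃ N : ℕ, ∀ m ≥ N, ∀ n ≥ N, ρ (S m) (S n) < ε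

def TendsToWith {α : Type*} (ρ : α → α → ℝ) (S : ℕ → α) (l : α) : Prop :=
  ∀ ε : ℝ, 0 < ε → ∃ N : ℕ, ∀ n ≥ N, ρ (S n) l < ε

def IsCompleteWith {α : Type*} (ρ : α → α → ℝ) : Prop :=
  ∀ S : ℕ → α, IsCauchyWith ρ S → ∃ l, TendsToWith ρ S l

/-- the topology generated by the open balls of `ρ` -/
def topOf {α : Type*} (ρ : α → α → ℝ) : TopologicalSpace α :=
  TopologicalSpace.generateFrom {s | ∃ (x : α) (ε : ℝ), s = {y | ρ x y < ε}}

/-- `sup d`, the supremum of all distances in `X` -/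
noncomputable def supD (X : Type*) [MetricSpace X] : ℝ :=
  sSup {r : ℝ | ∃ x y : X, dist x y = r}

/-- The multiset distance `d_E`: enumerate `a` and `c` with multiplicity in all possible
orders; the shorter enumeration is matched against an initial part of the other, taking
the sum of the distances of matched pairs plus the notional part `M * |C(c) - C(a)|`;
`d_E` is the least such value. -/
noncomputable def dE {X : Type*} [MetricSpace X] (M : ℝ) (a c : Multiset X) : ℝ :=
  sInf {r : ℝ | ∃ la lc : List X, (la : Multiset X) = a ∧ (lc : Multiset X) = c ∧
    r = (List.zipWith dist la lc).sum + M * |(c.card : ℝ) - (a.card : ℝ)|}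

/-- `d_Em`, the mean version of `d_E` (equal to `0` on the pair of empty multisets). -/
noncomputable def dEm {X : Type*} [MetricSpace X] (M : ℝ) (a c : Multiset X) : ℝ :=
  dE M a c / (max a.card c.card : ℕ)


section auxlemmas

lemma zipWith_eq_map_zip' {α β γ} (f : α → β → γ) :
    ∀ (l1 : List α) (l2 : List β), List.zipWith f l1 l2 = (l1.zip l2).map (fun e => f e.1 e.2)
  | [], _ => by simp
  | _ :: _, [] => by simp
  | a :: l1, b :: l2 => by simp [zipWith_eq_map_zip' f l1 l2]

lemma map_fst_zip_sublist' {α β} : ∀ (l1 : List α) (l2 : List β),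
    ((l1.zip l2).map Prod.fst).Sublist l1
  | [], _ => by simp
  | _ :: _, [] => by simp
  | a :: l1, b :: l2 => by simpa using (map_fst_zip_sublist' l1 l2).cons₂ a

lemma map_snd_zip_sublist' {α β} : ∀ (l1 : List α) (l2 : List β),
    ((l1.zip l2).map Prod.snd).Sublist l2
  | [], _ => by simp
  | _ :: _, [] => by simp
  | a :: l1, b :: l2 => by simpa using (map_snd_zip_sublist' l1 l2).cons₂ b

lemma zipWith_map_same' {α β γ δ} (f : β → γ → δ) (g : α → β) (h : α → γ) :
    ∀ (l : List α), List.zipWith f (l.map g) (l.map h) = l.map (fun x => f (g x) (h x))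
  | [] => by simp
  | a :: l => by simp [zipWith_map_same' f g h l]

/-- select a sub-multiset with prescribed image -/
lemma exists_le_map_eq' {α β} [DecidableEq α] [DecidableEq β] (f : α → β) :
    ∀ (w : Multiset β) (p : Multiset α), w ≤ p.map f → ∃ p' ≤ p, p'.map f = w := by
  intro w
  induction w using Multiset.induction with
  | empty => exact fun p _ => ⟨0, Multiset.zero_le p, rfl⟩
  | cons y w ih =>
    intro p hw
    have hy : y ∈ p.map f := Multiset.mem_of_le hw (Multiset.mem_cons_self y w)
    obtain ⟨e, he, rfl⟩ := Multiset.mem_map.mp hy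
    have hp : p = e ::ₘ p.erase e := (Multiset.cons_erase he).symm
    have hw' : w ≤ (p.erase e).map f := by
      have : f e ::ₘ w ≤ f e ::ₘ (p.erase e).map f := by
        rw [← Multiset.map_cons, ← hp]; exact hw
      exact (Multiset.cons_le_cons_iff (f e)).mp this
    obtain ⟨p', hp', hmap⟩ := ih (p.erase e) hw'
    exact ⟨e ::ₘ p', hp ▸ Multiset.cons_le_cons e hp', by simp [hmap]⟩

end auxlemmas

section dElemmas

variable {X : Type*} [MetricSpace X] {M : ℝ}

/-- the defining set of `dE` -/
def dESet (M : ℝ) (a c : Multiset X) : Set ℝ :=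
  {r : ℝ | ∃ la lc : List X, (la : Multiset X) = a ∧ (lc : Multiset X) = c ∧
    r = (List.zipWith dist la lc).sum + M * |(Multiset.card c : ℝ) - (Multiset.card a : ℝ)|}

lemma dE_def (a c : Multiset X) : dE M a c = sInf (dESet M a c) := rfl

lemma zip_dist_sum_nonneg' (la lc : List X) : 0 ≤ (List.zipWith dist la lc).sum := by
  rw [zipWith_eq_map_zip']
  exact List.sum_nonneg (by simp only [List.mem_map]; rintro _ ⟨e, -, rfl⟩; exact dist_nonneg)

lemma dESet_lb (hM : 0 ≤ M) (a c : Multiset X) :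
    ∀ r ∈ dESet M a c, M * |(Multiset.card c : ℝ) - (Multiset.card a : ℝ)| ≤ r := by
  rintro r ⟨la, lc, -, -, rfl⟩
  have := zip_dist_sum_nonneg' la lc
  linarith

lemma dESet_nonempty (a c : Multiset X) : (dESet M a c).Nonempty :=
  ⟨_, a.toList, c.toList, a.coe_toList, c.coe_toList, rfl⟩

lemma dESet_bddBelow (hM : 0 ≤ M) (a c : Multiset X) : BddBelow (dESet M a c) :=
  ⟨_, dESet_lb hM a c⟩

lemma dE_le_mem (hM : 0 ≤ M) {a c : Multiset X} {r : ℝ} (hr : r ∈ dESet M a c) :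
    dE M a c ≤ r := csInf_le (dESet_bddBelow hM a c) hr

lemma le_dE (hM : 0 ≤ M) (a c : Multiset X) :
    M * |(Multiset.card c : ℝ) - (Multiset.card a : ℝ)| ≤ dE M a c :=
  le_csInf (dESet_nonempty a c) (dESet_lb hM a c)

lemma dE_nonneg (hM : 0 ≤ M) (a c : Multiset X) : 0 ≤ dE M a c :=
  le_trans (by positivity) (le_dE hM a c)

lemma dE_self (hM : 0 ≤ M) (a : Multiset X) : dE M a a = 0 := by
  refine le_antisymm ?_ (dE_nonneg hM a a)
  refine dE_le_mem hM ⟨a.toList, a.toList, a.coe_toList, a.coe_toList, ?_⟩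
  have h : List.zipWith dist a.toList a.toList = a.toList.map (fun x => dist x x) := by
    simpa using zipWith_map_same' dist id id a.toList
  simp [h]

/-- any partial matching bounds `dE` from above -/
lemma dE_le_pairs (hM : 0 ≤ M) (hd : ∀ x y : X, dist x y ≤ M) (a c : Multiset X)
    (p : Multiset (X × X)) (hpa : p.map Prod.fst ≤ a) (hpc : p.map Prod.snd ≤ c) :
    dE M a c ≤ (p.map (fun e => dist e.1 e.2)).sum
      + M * ((Multiset.card a : ℝ) - Multiset.card p)
      + M * ((Multiset.card c : ℝ) - Multiset.card p) := by
  classical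
  set lp := p.toList with hlp
  set ra := (a - p.map Prod.fst).toList with hra0
  set rc := (c - p.map Prod.snd).toList with hrc0
  have hmem : ((List.zipWith dist (lp.map Prod.fst ++ ra) (lp.map Prod.snd ++ rc)).sum
      + M * |(Multiset.card c : ℝ) - (Multiset.card a : ℝ)|) ∈ dESet M a c := by
    refine ⟨lp.map Prod.fst ++ ra, lp.map Prod.snd ++ rc, ?_, ?_, rfl⟩
    · rw [← Multiset.coe_add, ← Multiset.map_coe, hlp, Multiset.coe_toList, hra0,
        Multiset.coe_toList, add_comm]
      exact tsub_add_cancel_of_le hpa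
    · rw [← Multiset.coe_add, ← Multiset.map_coe, hlp, Multiset.coe_toList, hrc0,
        Multiset.coe_toList, add_comm]
      exact tsub_add_cancel_of_le hpc
  refine le_trans (dE_le_mem hM hmem) ?_
  have hlen : (lp.map Prod.fst).length = (lp.map Prod.snd).length := by simp
  rw [List.zipWith_append hlen, List.sum_append]
  have h1 : List.zipWith dist (lp.map Prod.fst) (lp.map Prod.snd)
      = lp.map (fun e => dist e.1 e.2) := by
    simpa using zipWith_map_same' dist Prod.fst Prod.snd lp
  have h2 : (lp.map (fun e => dist e.1 e.2)).sum = (p.map (fun e => dist e.1 e.2)).sum := by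
    rw [hlp, ← Multiset.sum_coe, ← Multiset.map_coe, Multiset.coe_toList]
  have hka : Multiset.card p ≤ Multiset.card a := by simpa using Multiset.card_le_card hpa
  have hkc : Multiset.card p ≤ Multiset.card c := by simpa using Multiset.card_le_card hpc
  have hA : ((Multiset.card a - Multiset.card p : ℕ) : ℝ)
      = (Multiset.card a : ℝ) - Multiset.card p := by
    push_cast [Nat.cast_sub hka]; ring
  have hC : ((Multiset.card c - Multiset.card p : ℕ) : ℝ)
      = (Multiset.card c : ℝ) - Multiset.card p := by
    push_cast [Nat.cast_sub hkc]; ring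
  have hlra : ra.length = Multiset.card a - Multiset.card p := by
    rw [hra0]
    simp [Multiset.card_sub hpa]
  have hlrc : rc.length = Multiset.card c - Multiset.card p := by
    rw [hrc0]
    simp [Multiset.card_sub hpc]
  have h3 : (List.zipWith dist ra rc).sum
      ≤ ((min (Multiset.card a - Multiset.card p) (Multiset.card c - Multiset.card p) : ℕ) : ℝ)
        * M := by
    have hb : ∀ x ∈ List.zipWith dist ra rc, x ≤ M := by
      intro x hx
      rw [zipWith_eq_map_zip'] at hx
      obtain ⟨e, -, rfl⟩ := List.mem_map.mp hx
      exact hd _ _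
    refine le_trans (List.sum_le_card_nsmul _ M hb) ?_
    simp [nsmul_eq_mul, List.length_zipWith, hlra, hlrc]
  rw [h1, h2]
  have habs : M * |(Multiset.card c : ℝ) - (Multiset.card a : ℝ)|
      + ((min (Multiset.card a - Multiset.card p) (Multiset.card c - Multiset.card p) : ℕ) : ℝ) * M
      ≤ M * ((Multiset.card a : ℝ) - Multiset.card p)
        + M * ((Multiset.card c : ℝ) - Multiset.card p) := by
    have hmincast : ((min (Multiset.card a - Multiset.card p)
        (Multiset.card c - Multiset.card p) : ℕ) : ℝ)
        = min ((Multiset.card a : ℝ) - Multiset.card p)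
            ((Multiset.card c : ℝ) - Multiset.card p) := by
      rw [Nat.cast_min, hA, hC]
    rw [hmincast]
    rcases abs_cases ((Multiset.card c : ℝ) - (Multiset.card a : ℝ)) with ⟨he, -⟩ | ⟨he, -⟩ <;>
      rw [he] <;>
      [(have hm := min_le_left ((Multiset.card a : ℝ) - Multiset.card p)
          ((Multiset.card c : ℝ) - Multiset.card p));
       (have hm := min_le_right ((Multiset.card a : ℝ) - Multiset.card p)
          ((Multiset.card c : ℝ) - Multiset.card p))] <;>
      nlinarith [mul_le_mul_of_nonneg_left hm hM, hA, hC, Nat.cast_nonneg (α := ℝ)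
        (min (Multiset.card a - Multiset.card p) (Multiset.card c - Multiset.card p))]
  nlinarith [h3, habs]

end dElemmas

section compTri
variable {X : Type*} [MetricSpace X] {M : ℝ}

lemma exists_comp' (p' q' : Multiset (X × X)) (h : p'.map Prod.snd = q'.map Prod.fst) :
    ∃ r : Multiset (X × X), r.map Prod.fst = p'.map Prod.fst ∧ r.map Prod.snd = q'.map Prod.snd ∧
      (r.map (fun e => dist e.1 e.2)).sum
        ≤ (p'.map (fun e => dist e.1 e.2)).sum + (q'.map (fun e => dist e.1 e.2)).sum := by
  classical
  induction p' using Multiset.induction generalizing q' with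
  | empty =>
    have : q' = 0 := by
      rw [← Multiset.card_eq_zero]
      have := congrArg Multiset.card h
      simpa using this.symm
    subst this
    exact ⟨0, by simp, by simp, by simp⟩
  | cons e t ih =>
    have hy : e.2 ∈ q'.map Prod.fst := by
      rw [← h, Multiset.map_cons]; exact Multiset.mem_cons_self _ _
    obtain ⟨g, hg, hge⟩ := Multiset.mem_map.mp hy
    have hq : q' = g ::ₘ q'.erase g := (Multiset.cons_erase hg).symm
    have hmap : q'.map Prod.fst = e.2 ::ₘ (q'.erase g).map Prod.fst := by
      conv_lhs => rw [hq]
      rw [Multiset.map_cons, hge]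
    have h' : t.map Prod.snd = (q'.erase g).map Prod.fst := by
      rw [Multiset.map_cons, hmap] at h
      exact (Multiset.cons_inj_right _).mp h
    obtain ⟨r0, hr1, hr2, hr3⟩ := ih (q'.erase g) h'
    refine ⟨(e.1, g.2) ::ₘ r0, by simp [hr1], ?_, ?_⟩
    · rw [hq]; simp [hr2]
    · rw [hq]
      simp only [Multiset.map_cons, Multiset.sum_cons]
      have htri : dist e.1 g.2 ≤ dist e.1 e.2 + dist g.1 g.2 := by
        rw [← hge]; exact dist_triangle _ _ _
      linarith

lemma dE_triangle (hM : 0 ≤ M) (hd : ∀ x y : X, dist x y ≤ M) (a b c : Multiset X) :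
    dE M a c ≤ dE M a b + dE M b c := by
  classical
  refine le_of_forall_pos_le_add fun ε hε => ?_
  have h1 : sInf (dESet M a b) < dE M a b + ε / 2 := by rw [← dE_def]; linarith
  have h2 : sInf (dESet M b c) < dE M b c + ε / 2 := by rw [← dE_def]; linarith
  obtain ⟨r1, hr1mem, hr1⟩ := exists_lt_of_csInf_lt (dESet_nonempty a b) h1
  obtain ⟨r2, hr2mem, hr2⟩ := exists_lt_of_csInf_lt (dESet_nonempty b c) h2
  obtain ⟨la, lb, hla, hlb, rfl⟩ := hr1mem
  obtain ⟨lb', lc, hlb', hlc, rfl⟩ := hr2mem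
  set p : Multiset (X × X) := ↑(la.zip lb) with hp
  set q : Multiset (X × X) := ↑(lb'.zip lc) with hq
  -- basic facts about p
  have hpa : p.map Prod.fst ≤ a := by
    rw [hp, Multiset.map_coe, ← hla]
    exact Multiset.coe_le.mpr (map_fst_zip_sublist' la lb).subperm
  have hpb : p.map Prod.snd ≤ b := by
    rw [hp, Multiset.map_coe, ← hlb]
    exact Multiset.coe_le.mpr (map_snd_zip_sublist' la lb).subperm
  have hqb : q.map Prod.fst ≤ b := by
    rw [hq, Multiset.map_coe, ← hlb']
    exact Multiset.coe_le.mpr (map_fst_zip_sublist' lb' lc).subperm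
  have hqc : q.map Prod.snd ≤ c := by
    rw [hq, Multiset.map_coe, ← hlc]
    exact Multiset.coe_le.mpr (map_snd_zip_sublist' lb' lc).subperm
  have hSp : (p.map (fun e => dist e.1 e.2)).sum = (List.zipWith dist la lb).sum := by
    rw [hp, Multiset.map_coe, Multiset.sum_coe, zipWith_eq_map_zip']
  have hSq : (q.map (fun e => dist e.1 e.2)).sum = (List.zipWith dist lb' lc).sum := by
    rw [hq, Multiset.map_coe, Multiset.sum_coe, zipWith_eq_map_zip']
  have hlena : la.length = Multiset.card a := by rw [← hla]; simp
  have hlenb : lb.length = Multiset.card b := by rw [← hlb]; simp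
  have hlenb' : lb'.length = Multiset.card b := by rw [← hlb']; simp
  have hlenc : lc.length = Multiset.card c := by rw [← hlc]; simp
  have hkp : Multiset.card p = min (Multiset.card a) (Multiset.card b) := by
    rw [hp, Multiset.coe_card, List.length_zip, hlena, hlenb]
  have hkq : Multiset.card q = min (Multiset.card b) (Multiset.card c) := by
    rw [hq, Multiset.coe_card, List.length_zip, hlenb', hlenc]
  -- the common middle part
  set s : Multiset X := p.map Prod.snd with hs
  set t : Multiset X := q.map Prod.fst with ht
  set w : Multiset X := s - (s - t) with hw
  have hws : w ≤ s := tsub_le_self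
  have hwt : w ≤ t := by
    rw [hw, tsub_le_iff_right]
    exact le_trans le_tsub_add (le_of_eq (add_comm _ _))
  obtain ⟨p', hp'le, hp'map⟩ := exists_le_map_eq' Prod.snd w p hws
  obtain ⟨q', hq'le, hq'map⟩ := exists_le_map_eq' Prod.fst w q hwt
  obtain ⟨r, hrfst, hrsnd, hrsum⟩ := exists_comp' p' q' (by rw [hp'map, hq'map])
  -- cardinality bookkeeping (in ℕ)
  have hcard_w : Multiset.card w + Multiset.card b ≥ Multiset.card p + Multiset.card q := by
    have e1 : Multiset.card w = Multiset.card s - Multiset.card (s - t) :=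
      Multiset.card_sub tsub_le_self
    have e2 : s - t ≤ b - t := tsub_le_tsub_right hpb t
    have e3 : Multiset.card (b - t) = Multiset.card b - Multiset.card t :=
      Multiset.card_sub hqb
    have e4 : Multiset.card (s - t) ≤ Multiset.card b - Multiset.card t :=
      e3 ▸ Multiset.card_le_card e2
    have e5 : Multiset.card s = Multiset.card p := by rw [hs, Multiset.card_map]
    have e6 : Multiset.card t = Multiset.card q := by rw [ht, Multiset.card_map]
    have e7 : Multiset.card q ≤ Multiset.card b := by
      rw [← e6]; simpa [ht] using Multiset.card_le_card hqb
    have e8 : Multiset.card p ≤ Multiset.card b := by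
      rw [← e5]; simpa [hs] using Multiset.card_le_card hpb
    omega
  have hkr : Multiset.card r = Multiset.card w := by
    have : Multiset.card r = Multiset.card p' := by
      have := congrArg Multiset.card hrfst; simpa using this
    rw [this]
    have := congrArg Multiset.card hp'map; simpa using this
  -- apply the pairing bound
  have hbound := dE_le_pairs hM hd a c r
    (le_trans (le_of_eq hrfst) (le_trans (Multiset.map_le_map hp'le) hpa))
    (le_trans (le_of_eq hrsnd) (le_trans (Multiset.map_le_map hq'le) hqc))
  -- sums over submultisets
  have hsub_sum : ∀ (u v : Multiset (X × X)), u ≤ v →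
      (u.map (fun e => dist e.1 e.2)).sum ≤ (v.map (fun e => dist e.1 e.2)).sum := by
    intro u v huv
    obtain ⟨z, rfl⟩ := Multiset.le_iff_exists_add.mp huv
    rw [Multiset.map_add, Multiset.sum_add]
    have : 0 ≤ (z.map (fun e => dist e.1 e.2)).sum :=
      Multiset.sum_nonneg (by simp only [Multiset.mem_map]; rintro _ ⟨e, -, rfl⟩; exact dist_nonneg)
    linarith
  have hSr : (r.map (fun e => dist e.1 e.2)).sum
      ≤ (p.map (fun e => dist e.1 e.2)).sum + (q.map (fun e => dist e.1 e.2)).sum :=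
    le_trans hrsum (add_le_add (hsub_sum _ _ hp'le) (hsub_sum _ _ hq'le))
  -- final arithmetic
  set A := Multiset.card a
  set B := Multiset.card b
  set C := Multiset.card c
  set kp := Multiset.card p
  set kq := Multiset.card q
  set kr := Multiset.card r
  have habs1 : |(B : ℝ) - A| = (A : ℝ) + B - 2 * kp := by
    rcases le_total A B with hAB | hAB
    · rw [abs_of_nonneg (sub_nonneg.mpr ((Nat.cast_le (α := ℝ)).mpr hAB)), hkp,
        min_eq_left hAB]; push_cast; ring
    · rw [abs_of_nonpos (sub_nonpos.mpr ((Nat.cast_le (α := ℝ)).mpr hAB)), hkp,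
        min_eq_right hAB]; push_cast; ring
  have habs2 : |(C : ℝ) - B| = (B : ℝ) + C - 2 * kq := by
    rcases le_total B C with hBC | hBC
    · rw [abs_of_nonneg (sub_nonneg.mpr ((Nat.cast_le (α := ℝ)).mpr hBC)), hkq,
        min_eq_left hBC]; push_cast; ring
    · rw [abs_of_nonpos (sub_nonpos.mpr ((Nat.cast_le (α := ℝ)).mpr hBC)), hkq,
        min_eq_right hBC]; push_cast; ring
  have hcast : (kp : ℝ) + kq ≤ (kr : ℝ) + B := by
    have : kp + kq ≤ kr + B := by rw [hkr]; omega
    exact_mod_cast this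
  have hpen : M * ((A : ℝ) - kr) + M * ((C : ℝ) - kr)
      ≤ M * |(B : ℝ) - A| + M * |(C : ℝ) - B| := by
    rw [habs1, habs2]
    nlinarith [hcast]
  rw [hSp, hSq] at hSr
  linarith [hbound, hSr, hpen, hr1, hr2]

lemma dEm_nonneg (hM : 0 ≤ M) (a c : Multiset X) : 0 ≤ dEm M a c :=
  div_nonneg (dE_nonneg hM a c) (Nat.cast_nonneg _)

lemma card_eq_of_dE_lt (hM : 0 < M) {a c : Multiset X} (h : dE M a c < M) :
    Multiset.card a = Multiset.card c := by
  have h1 := le_dE hM.le a c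
  have h2 : |(Multiset.card c : ℝ) - (Multiset.card a : ℝ)| < 1 := by
    by_contra h3
    push_neg at h3
    nlinarith
  rcases le_total (Multiset.card a) (Multiset.card c) with hac | hac
  · refine le_antisymm hac ?_
    rw [abs_of_nonneg (sub_nonneg.mpr ((Nat.cast_le (α := ℝ)).mpr hac))] at h2
    have : (Multiset.card c : ℝ) < Multiset.card a + 1 := by linarith
    exact_mod_cast Nat.lt_add_one_iff.mp (by exact_mod_cast this)
  · refine le_antisymm ?_ hac
    rw [abs_of_nonpos (sub_nonpos.mpr ((Nat.cast_le (α := ℝ)).mpr hac))] at h2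
    have : (Multiset.card a : ℝ) < Multiset.card c + 1 := by linarith
    exact_mod_cast Nat.lt_add_one_iff.mp (by exact_mod_cast this)
end compTri

lemma topOf_isOpen_of {α : Type*} (σ : α → α → ℝ) (U : Set α)
    (h : ∀ z ∈ U, ∃ x ε, σ x z < ε ∧ ∀ y, σ x y < ε → y ∈ U) :
    @IsOpen α (topOf σ) U := by
  classical
  letI := topOf σ
  choose! x ε h1 h2 using h
  have hU : U = ⋃ z ∈ U, {y | σ (x z) y < ε z} := by
    ext u
    simp only [Set.mem_iUnion, Set.mem_setOf_eq]
    exact ⟨fun hu => ⟨u, hu, h1 u hu⟩, fun ⟨z, hz, hu⟩ => h2 z hz u hu⟩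
  rw [hU]
  refine isOpen_biUnion fun z _ => ?_
  exact TopologicalSpace.isOpen_generateFrom_of_mem ⟨x z, ε z, rfl⟩

/-- For `d` bounded with `(sup d)/M ≤ 1` (so that `d_E` and `d_Em` are metrics),
`d_E` and `d_Em` induce the same topology on `E`. -/
theorem stmt_7 {X : Type*} [MetricSpace X] [Nontrivial X] (M : ℝ) (hM : 0 < M)
    (hbdd : ∃ B : ℝ, ∀ x y : X, dist x y ≤ B) (htheta : supD X / M ≤ 1) :
    topOf (dE (X := X) M) = topOf (dEm (X := X) M) := by
  have hdM : ∀ x y : X, dist x y ≤ M := by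
    obtain ⟨B, hB⟩ := hbdd
    intro x y
    have hba : BddAbove {r : ℝ | ∃ x y : X, dist x y = r} := by
      refine ⟨B, ?_⟩; rintro r ⟨u, v, rfl⟩; exact hB u v
    have h1 : dist x y ≤ supD X := le_csSup hba ⟨x, y, rfl⟩
    have h2 : supD X ≤ M := (div_le_one hM).mp htheta
    linarith
  have hM0 : (0 : ℝ) ≤ M := hM.le
  apply le_antisymm
  · -- each dEm-ball is open for the dE topology
    refine le_generateFrom ?_
    rintro s ⟨x, ε, rfl⟩
    refine topOf_isOpen_of _ _ fun z hz => ?_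
    simp only [Set.mem_setOf_eq] at hz ⊢
    have hε : 0 < ε := lt_of_le_of_lt (dEm_nonneg hM0 x z) hz
    by_cases hm : max (Multiset.card x) (Multiset.card z) = 0
    · obtain ⟨hx0, hz0⟩ := Nat.max_eq_zero_iff.mp hm
      rw [Multiset.card_eq_zero] at hx0 hz0
      refine ⟨z, min M ε, by rw [dE_self hM0]; positivity, fun y hy => ?_⟩
      have hcy : Multiset.card z = Multiset.card y :=
        card_eq_of_dE_lt hM (lt_of_lt_of_le hy (min_le_left _ _))
      have hy0 : y = 0 := by
        rw [← Multiset.card_eq_zero, ← hcy, hz0]; simp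
      show dEm M x y < ε
      rw [hx0, hy0]
      simpa [dEm] using hε
    · have hmpos : (0 : ℝ) < ((max (Multiset.card x) (Multiset.card z) : ℕ) : ℝ) := by
        exact_mod_cast Nat.pos_of_ne_zero hm
      have hdExz : dE M x z
          = dEm M x z * ((max (Multiset.card x) (Multiset.card z) : ℕ) : ℝ) := by
        rw [dEm, div_mul_cancel₀ _ (ne_of_gt hmpos)]
      set δ := min M (((max (Multiset.card x) (Multiset.card z) : ℕ) : ℝ) * (ε - dEm M x z))
        with hδdef
      have hδ : 0 < δ := lt_min hM (by nlinarith)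
      refine ⟨z, δ, by rw [dE_self hM0]; exact hδ, fun y hy => ?_⟩
      have hcy : Multiset.card z = Multiset.card y :=
        card_eq_of_dE_lt hM (lt_of_lt_of_le hy (min_le_left _ _))
      show dEm M x y < ε
      have hmaxy : max (Multiset.card x) (Multiset.card y)
          = max (Multiset.card x) (Multiset.card z) := by rw [← hcy]
      rw [dEm, hmaxy, div_lt_iff₀ hmpos]
      have htri := dE_triangle hM0 hdM x z y
      have h2 : dE M z y
          < ((max (Multiset.card x) (Multiset.card z) : ℕ) : ℝ) * (ε - dEm M x z) :=
        lt_of_lt_of_le hy (min_le_right _ _)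
      nlinarith
  · -- each dE-ball is open for the dEm topology
    refine le_generateFrom ?_
    rintro s ⟨x, ε, rfl⟩
    refine topOf_isOpen_of _ _ fun z hz => ?_
    simp only [Set.mem_setOf_eq] at hz ⊢
    have hεd : 0 < ε - dE M x z := by linarith
    set δ := min M (ε - dE M x z) / ((Multiset.card z : ℝ) + 1) with hδdef
    have hδ : 0 < δ := div_pos (lt_min hM hεd) (by positivity)
    refine ⟨z, δ, ?_, fun y hy => ?_⟩
    · show dEm M z z < δ
      rw [dEm, dE_self hM0, zero_div]; exact hδ
    · show dE M x y < ε
      have hδk1 : δ * ((Multiset.card z : ℝ) + 1) = min M (ε - dE M x z) := by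
        rw [hδdef]; field_simp
      rcases le_or_gt (Multiset.card y) (Multiset.card z) with hjk | hjk
      · rcases Nat.eq_zero_or_pos (Multiset.card z) with hk0 | hkpos
        · have hy0 : y = 0 := by rw [← Multiset.card_eq_zero]; omega
          have hz0 : z = 0 := by rw [← Multiset.card_eq_zero]; exact hk0
          rw [hy0, ← hz0]
          exact hz
        · have hkpos' : (0 : ℝ) < (Multiset.card z : ℝ) := by exact_mod_cast hkpos
          have hdzy : dE M z y = dEm M z y * (Multiset.card z : ℝ) := by
            rw [dEm, max_eq_left hjk, div_mul_cancel₀ _ (ne_of_gt hkpos')]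
          have h1 : dE M z y < δ * (Multiset.card z : ℝ) := by
            rw [hdzy]; exact mul_lt_mul_of_pos_right hy hkpos'
          have h2 : δ * (Multiset.card z : ℝ) < ε - dE M x z := by
            have := min_le_right M (ε - dE M x z)
            nlinarith
          have htri := dE_triangle hM0 hdM x z y
          linarith
      · exfalso
        have hjpos : (0 : ℝ) < (Multiset.card y : ℝ) := by
          exact_mod_cast lt_of_le_of_lt (Nat.zero_le _) hjk
        have habs : M * ((Multiset.card y : ℝ) - Multiset.card z) ≤ dE M z y := by
          have h := le_dE hM0 z y
          rwa [abs_of_nonneg (sub_nonneg.mpr ((Nat.cast_le (α := ℝ)).mpr hjk.le))] at h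
        have hdzy : dE M z y = dEm M z y * (Multiset.card y : ℝ) := by
          rw [dEm, max_eq_right hjk.le, div_mul_cancel₀ _ (ne_of_gt hjpos)]
        have h1 : dE M z y < δ * (Multiset.card y : ℝ) := by
          rw [hdzy]; exact mul_lt_mul_of_pos_right hy hjpos
        have hδM : δ * ((Multiset.card z : ℝ) + 1) ≤ M := by
          rw [hδk1]; exact min_le_left _ _
        have hnat : (Multiset.card y : ℝ)
            ≤ ((Multiset.card y : ℝ) - Multiset.card z) * ((Multiset.card z : ℝ) + 1) := by
          obtain ⟨d, hd⟩ := Nat.exists_eq_add_of_lt hjk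
          rw [hd]
          push_cast
          nlinarith [Nat.cast_nonneg (α := ℝ) d, Nat.cast_nonneg (α := ℝ) (Multiset.card z)]
        nlinarith [hδ.le, Nat.cast_nonneg (α := ℝ) (Multiset.card z)]
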